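/- Let p be a probability distribution on a finite set S and let f, g : S → [0, b] be two functions bounded by b ≥ 0. Then Var_p(f) ≤ 2·Var_p(g) + 2b·E_p[|f − g|], where Var_p(f) = E_p[(f − E_p f)²]. -/
import Mathlib


theorem variance_compare {S : Type*} [Fintype S] [Nonempty S]
    (p f g : S → ℝ) (b : ℝ) (hb : 0 ≤ b)
    (hp : ∀ s, 0 ≤ p s) (hp1 : ∑ s, p s = 1)
    (hf : ∀ s, 0 ≤ f s ∧ f s ≤ b) (hg : ∀ s, 0 ≤ g s ∧ g s ≤ b) :
    ∑ s, p s * (f s - ∑ s', p s' * f s') ^ 2 ≤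
      2 * (∑ s, p s * (g s - ∑ s', p s' * g s') ^ 2) +
        2 * b * ∑ s, p s * |f s - g s| := by
  set A := ∑ s', p s' * f s' with hA
  set B := ∑ s', p s' * g s' with hB
  have key : ∀ s, (f s - B) ^ 2 ≤ 2 * (g s - B) ^ 2 + 2 * b * |f s - g s| := by
    intro s
    have habs : |f s - g s| ≤ b := by
      rw [abs_le]
      constructor <;> [linarith [(hf s).1, (hg s).2]; linarith [(hf s).2, (hg s).1]]
    have h1 : (f s - g s) ^ 2 ≤ b * |f s - g s| := by
      calc (f s - g s) ^ 2 = |f s - g s| * |f s - g s| := by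
            rw [← sq_abs]; ring
        _ ≤ b * |f s - g s| := by
            apply mul_le_mul_of_nonneg_right habs (abs_nonneg _)
    nlinarith [sq_nonneg (f s - g s - (g s - B))]
  have step2 : ∑ s, p s * (f s - B) ^ 2 ≤
      2 * (∑ s, p s * (g s - B) ^ 2) + 2 * b * ∑ s, p s * |f s - g s| := by
    rw [Finset.mul_sum, Finset.mul_sum, ← Finset.sum_add_distrib]
    apply Finset.sum_le_sum
    intro s _
    have := key s
    have hps := hp s
    nlinarith
  have step1 : ∑ s, p s * (f s - A) ^ 2 ≤ ∑ s, p s * (f s - B) ^ 2 := by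
    have expand : ∑ s, p s * (f s - B) ^ 2 - ∑ s, p s * (f s - A) ^ 2 = (A - B) ^ 2 := by
      rw [← Finset.sum_sub_distrib]
      have h : ∀ s, p s * (f s - B) ^ 2 - p s * (f s - A) ^ 2 =
          (2 * (A - B)) * (p s * f s) + (B ^ 2 - A ^ 2) * p s := by
        intro s; ring
      simp_rw [h]
      rw [Finset.sum_add_distrib, ← Finset.mul_sum, ← Finset.mul_sum, ← hA, hp1]
      ring
    linarith [sq_nonneg (A - B)]
  linarith
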